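/- Let C ⊆ ℝⁿ be a nonempty compact β-strongly convex set (β > 0) with diameter D > 0, and suppose there exists R_min > 0 such that: (i) for every boundary point x̄ ∈ ∂C there is a unit vector μ(x̄) with ⟨μ(x̄), y − x̄⟩ ≥ 0 for all y ∈ C and with the closed ball of center x̄ + R_min·μ(x̄) and radius R_min contained in C; and (ii) at each boundary point the unit outward normal is unique, i.e., any two unit vectors satisfying the supporting condition of (i) at x̄ coincide. Set κ := min{2βR_min, R_min/D}. Then for every x ∈ C and every g ∈ ℝⁿ with g ≠ 0, there exists a closed Euclidean ball B ⊆ C with x ∈ B such that max_{y∈B} ⟨g, x − y⟩ ≥ κ · max_{y∈C} ⟨g, x − y⟩. -/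

import Mathlib

/-- A set `C` is `β`-strongly convex if for all `x, y ∈ C` and `λ ∈ [0,1]`, the
closed ball of center `λx + (1−λ)y` and radius `β λ(1−λ) ‖x−y‖²` is contained in `C`. -/
def StronglyConvexSet {n : ℕ} (β : ℝ) (C : Set (EuclideanSpace ℝ (Fin n))) : Prop :=
  ∀ x ∈ C, ∀ y ∈ C, ∀ l ∈ Set.Icc (0 : ℝ) 1,
    Metric.closedBall (l • x + (1 - l) • y) (β * (l * (1 - l)) * ‖x - y‖ ^ 2) ⊆ C

/-- Uniform ball–gap comparability on all of `C`: if `C` is nonempty, compact and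
`β`-strongly convex with diameter `D > 0`, every boundary point admits an inward
unit normal with an inscribed tangent ball of radius `R_min` (and the supporting
unit normal at each boundary point is unique), then with
`κ = min{2βR_min, R_min/D}`, for every `x ∈ C` and `g ≠ 0` there is a closed ball
`B ⊆ C` containing `x` with `max_{y∈B} ⟨g, x − y⟩ ≥ κ · max_{y∈C} ⟨g, x − y⟩`. -/
lemma aux_closedBall_infDist_compl_subset {n : ℕ} {C : Set (EuclideanSpace ℝ (Fin n))}
    (hcl : IsClosed C) {x : EuclideanSpace ℝ (Fin n)} (hx : x ∈ C) :
    Metric.closedBall x (Metric.infDist x Cᶜ) ⊆ C := by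
  intro p hp
  by_contra hpC
  have hpc : p ∈ Cᶜ := hpC
  have h1 : Metric.infDist x Cᶜ ≤ dist x p := Metric.infDist_le_dist_of_mem hpc
  have h2 : dist x p ≤ Metric.infDist x Cᶜ := by
    rw [dist_comm]; exact Metric.mem_closedBall.mp hp
  have hxp : x ≠ p := fun h => hpC (h ▸ hx)
  have hd : 0 < dist x p := dist_pos.mpr hxp
  obtain ⟨ε, hε, hball⟩ := Metric.isOpen_iff.mp hcl.isOpen_compl p hpc
  set s : ℝ := min (ε/2) (dist x p) with hs
  have hs0 : 0 < s := lt_min (by linarith) hd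
  have hsd : s ≤ dist x p := min_le_right _ _
  set q := p + (s / dist x p) • (x - p) with hq
  have hdistqp : dist q p = s := by
    rw [dist_eq_norm]
    have heq : q - p = (s / dist x p) • (x - p) := by rw [hq]; abel
    rw [heq, norm_smul, Real.norm_eq_abs, abs_of_nonneg (by positivity),
      ← dist_eq_norm]
    exact div_mul_cancel₀ _ (ne_of_gt hd)
  have hqC : q ∈ Cᶜ := hball (by rw [Metric.mem_ball, hdistqp]; exact lt_of_le_of_lt (min_le_left _ _) (by linarith))
  have hdistxq : dist x q = dist x p - s := by
    rw [dist_eq_norm]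
    have : x - q = (1 - s / dist x p) • (x - p) := by
      rw [hq, sub_smul, one_smul]; module
    rw [this, norm_smul, Real.norm_eq_abs, abs_of_nonneg (by
      have := div_le_one_of_le₀ hsd (le_of_lt hd); linarith), ← dist_eq_norm]
    rw [sub_mul, one_mul, div_mul_cancel₀ _ (ne_of_gt hd)]
  have : Metric.infDist x Cᶜ ≤ dist x q := Metric.infDist_le_dist_of_mem hqC
  rw [hdistxq] at this
  linarith

lemma aux_sc_normal {n : ℕ} {β : ℝ} (hβ : 0 < β) {C : Set (EuclideanSpace ℝ (Fin n))}
    (hC : StronglyConvexSet β C) {z y m : EuclideanSpace ℝ (Fin n)}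
    (hz : z ∈ C) (hy : y ∈ C) (hm : ‖m‖ = 1)
    (hsup : ∀ w ∈ C, 0 ≤ (inner ℝ m (w - z) : ℝ)) :
    β * ‖y - z‖ ^ 2 ≤ (inner ℝ m (y - z) : ℝ) := by
  set h : ℝ := ‖y - z‖ with hh
  have hh0 : 0 ≤ h := norm_nonneg _
  set σ : ℝ := (inner ℝ m (y - z) : ℝ) with hσ
  have key : ∀ l : ℝ, 0 ≤ l → l < 1 → β * l * h ^ 2 ≤ σ := by
    intro l hl0 hl1
    set r : ℝ := β * (l * (1 - l)) * ‖z - y‖ ^ 2 with hr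
    have hr0 : 0 ≤ r := by
      have : 0 ≤ 1 - l := by linarith
      positivity
    have hmem : (l • z + (1 - l) • y) - r • m ∈ C := by
      apply hC z hz y hy l ⟨hl0, le_of_lt hl1⟩
      rw [Metric.mem_closedBall, dist_eq_norm]
      have : l • z + (1 - l) • y - r • m - (l • z + (1 - l) • y) = -(r • m) := by abel
      rw [this, norm_neg, norm_smul, Real.norm_eq_abs, abs_of_nonneg hr0, hm, mul_one]
    have h0 := hsup _ hmem
    have heq : (l • z + (1 - l) • y) - r • m - z = (1 - l) • (y - z) - r • m := by
      module
    rw [heq, inner_sub_right, real_inner_smul_right, real_inner_smul_right,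
      real_inner_self_eq_norm_mul_norm, hm] at h0
    have hzy : ‖z - y‖ = h := by rw [hh, norm_sub_rev]
    rw [hr, hzy] at h0
    -- h0 : 0 ≤ (1 - l) * σ - β * (l * (1-l)) * h^2 * (1*1)
    by_contra hcon
    push_neg at hcon
    have h1l : 0 < 1 - l := by linarith
    nlinarith [mul_lt_mul_of_pos_left hcon h1l]
  have hs0 : 0 ≤ σ := by simpa using key 0 le_rfl one_pos
  rcases eq_or_lt_of_le hh0 with h0 | hpos
  · rw [← h0]; simpa using hs0
  · by_contra hcon
    push_neg at hcon
    have hbh : 0 < β * h ^ 2 := by positivity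
    set l : ℝ := (σ / (β * h ^ 2) + 1) / 2 with hl
    have hl0 : 0 ≤ σ / (β * h ^ 2) := div_nonneg hs0 (le_of_lt hbh)
    have hl1 : σ / (β * h ^ 2) < 1 := (div_lt_one hbh).mpr hcon
    have hkl := key l (by rw [hl]; linarith) (by rw [hl]; linarith)
    have heq : σ / (β * h ^ 2) * (β * h ^ 2) = σ := div_mul_cancel₀ _ (ne_of_gt hbh)
    have hble : β * l * h ^ 2 = (σ / (β * h ^ 2) * (β * h ^ 2) + β * h ^ 2) / 2 := by
      rw [hl]; ring
    rw [heq] at hble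
    linarith

set_option maxHeartbeats 2000000 in
theorem uniform_ball_gap_comparability {n : ℕ} (β : ℝ) (hβ : 0 < β)
    (C : Set (EuclideanSpace ℝ (Fin n))) (hne : C.Nonempty) (hcomp : IsCompact C)
    (hC : StronglyConvexSet β C)
    (D : ℝ) (hD : 0 < D) (hdiam : Metric.diam C = D)
    (Rmin : ℝ) (hRmin : 0 < Rmin)
    (hroll : ∀ z ∈ frontier C, ∃ m : EuclideanSpace ℝ (Fin n), ‖m‖ = 1 ∧
      (∀ y ∈ C, 0 ≤ (inner ℝ m (y - z) : ℝ)) ∧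
      Metric.closedBall (z + Rmin • m) Rmin ⊆ C)
    (huniq : ∀ z ∈ frontier C, ∀ m₁ m₂ : EuclideanSpace ℝ (Fin n),
      ‖m₁‖ = 1 → (∀ y ∈ C, 0 ≤ (inner ℝ m₁ (y - z) : ℝ)) →
      ‖m₂‖ = 1 → (∀ y ∈ C, 0 ≤ (inner ℝ m₂ (y - z) : ℝ)) → m₁ = m₂) :
    ∀ x ∈ C, ∀ g : EuclideanSpace ℝ (Fin n), g ≠ 0 →
      ∃ (c : EuclideanSpace ℝ (Fin n)) (r : ℝ),
        Metric.closedBall c r ⊆ C ∧ x ∈ Metric.closedBall c r ∧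
        min (2 * β * Rmin) (Rmin / D) * sSup ((fun y => (inner ℝ g (x - y) : ℝ)) '' C) ≤
          sSup ((fun y => (inner ℝ g (x - y) : ℝ)) '' Metric.closedBall c r) := by
  intro x hx g hg
  classical
  have hG : 0 < ‖g‖ := norm_pos_iff.mpr hg
  set u : EuclideanSpace ℝ (Fin n) := ‖g‖⁻¹ • g with hu
  have hu1 : ‖u‖ = 1 := by
    rw [hu, norm_smul, Real.norm_eq_abs, abs_of_nonneg (inv_nonneg.mpr (norm_nonneg g))]
    field_simp
  have hgu : (inner ℝ g u : ℝ) = ‖g‖ := by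
    rw [hu, real_inner_smul_right, real_inner_self_eq_norm_mul_norm]
    field_simp
  have hcontg : Continuous (fun y : EuclideanSpace ℝ (Fin n) => (inner ℝ g y : ℝ)) :=
    continuous_const.inner continuous_id
  have hcontf : Continuous (fun y : EuclideanSpace ℝ (Fin n) => (inner ℝ g (x - y) : ℝ)) :=
    continuous_const.inner (continuous_const.sub continuous_id)
  obtain ⟨ys, hysC, hysmin⟩ := hcomp.exists_isMinOn hne hcontg.continuousOn
  have hmin : ∀ y ∈ C, (inner ℝ g ys : ℝ) ≤ inner ℝ g y := fun y hy => hysmin hy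
  -- ys is a frontier point
  have hysint : ys ∉ interior C := by
    intro hint
    obtain ⟨ε, hε, hball⟩ := Metric.isOpen_iff.mp isOpen_interior ys hint
    have hmem : ys - (ε / 2) • u ∈ C := by
      apply interior_subset
      apply hball
      rw [Metric.mem_ball, dist_eq_norm]
      have he : ys - (ε / 2) • u - ys = -((ε / 2) • u) := by abel
      rw [he, norm_neg, norm_smul, Real.norm_eq_abs, abs_of_nonneg (by linarith), hu1, mul_one]
      linarith
    have h1 := hmin _ hmem
    rw [inner_sub_right, real_inner_smul_right, hgu] at h1
    nlinarith
  have hysfr : ys ∈ frontier C := ⟨subset_closure hysC, hysint⟩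
  have husup : ∀ w ∈ C, 0 ≤ (inner ℝ u (w - ys) : ℝ) := by
    intro w hw
    rw [hu, real_inner_smul_left, inner_sub_right]
    have h1 := hmin w hw
    have h0 : (0:ℝ) ≤ ‖g‖⁻¹ := inv_nonneg.mpr (norm_nonneg g)
    have : (0:ℝ) ≤ (inner ℝ g w : ℝ) - inner ℝ g ys := by linarith
    positivity
  obtain ⟨m0, hm01, hm0sup, hm0ball⟩ := hroll ys hysfr
  have hm0u : m0 = u := huniq ys hysfr m0 u hm01 hm0sup hu1 husup
  rw [hm0u] at hm0ball
  -- 2 Rmin ≤ D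
  have h2R : 2 * Rmin ≤ D := by
    have hp1 : ys ∈ Metric.closedBall (ys + Rmin • u) Rmin := by
      rw [Metric.mem_closedBall, dist_eq_norm]
      have he : ys - (ys + Rmin • u) = -(Rmin • u) := by abel
      rw [he, norm_neg, norm_smul, Real.norm_eq_abs, abs_of_nonneg hRmin.le, hu1, mul_one]
    have hp2 : ys + (2 * Rmin) • u ∈ Metric.closedBall (ys + Rmin • u) Rmin := by
      rw [Metric.mem_closedBall, dist_eq_norm]
      have he : ys + (2 * Rmin) • u - (ys + Rmin • u) = Rmin • u := by module
      rw [he, norm_smul, Real.norm_eq_abs, abs_of_nonneg hRmin.le, hu1, mul_one]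
    have hdd := Metric.dist_le_diam_of_mem hcomp.isBounded (hm0ball hp1) (hm0ball hp2)
    rw [hdiam, dist_eq_norm] at hdd
    have he : ys - (ys + (2 * Rmin) • u) = -((2 * Rmin) • u) := by abel
    rw [he, norm_neg, norm_smul, Real.norm_eq_abs, abs_of_nonneg (by linarith), hu1, mul_one] at hdd
    exact hdd
  set κ : ℝ := min (2 * β * Rmin) (Rmin / D) with hκ
  have hκ1 : κ ≤ 2 * β * Rmin := min_le_left _ _
  have hκD : κ * D ≤ Rmin := by
    have h1 : κ ≤ Rmin / D := min_le_right _ _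
    have h2 := mul_le_mul_of_nonneg_right h1 hD.le
    rwa [div_mul_cancel₀ _ (ne_of_gt hD)] at h2
  have hκpos : 0 < κ := lt_min (by positivity) (by positivity)
  have hκle1 : κ ≤ 1 := by nlinarith
  -- sSup over C
  have hgreat : IsGreatest ((fun y => (inner ℝ g (x - y) : ℝ)) '' C) ((inner ℝ g (x - ys) : ℝ)) := by
    constructor
    · exact ⟨ys, hysC, rfl⟩
    · rintro v ⟨y, hy, rfl⟩
      simp only [inner_sub_right]
      have := hmin y hy
      linarith
  have hsupC : sSup ((fun y => (inner ℝ g (x - y) : ℝ)) '' C) = (inner ℝ g (x - ys) : ℝ) :=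
    hgreat.csSup_eq
  have hΔ0 : 0 ≤ (inner ℝ g (x - ys) : ℝ) := by
    rw [inner_sub_right]
    have := hmin x hx
    linarith
  have hΔD : (inner ℝ g (x - ys) : ℝ) ≤ ‖g‖ * D := by
    have h1 := real_inner_le_norm g (x - ys)
    have h2 : ‖x - ys‖ ≤ D := by
      rw [← dist_eq_norm, ← hdiam]
      exact Metric.dist_le_diam_of_mem hcomp.isBounded hx hysC
    nlinarith
  have hδ0 : 0 ≤ Metric.infDist x Cᶜ := Metric.infDist_nonneg
  set δ : ℝ := Metric.infDist x Cᶜ with hδ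
  rw [hsupC]
  by_cases hcase : κ * (inner ℝ g (x - ys) : ℝ) ≤ δ * ‖g‖
  · -- deep point: ball centered at x
    refine ⟨x, δ, aux_closedBall_infDist_compl_subset hcomp.isClosed hx,
      Metric.mem_closedBall_self hδ0, ?_⟩
    have hy0 : x - δ • u ∈ Metric.closedBall x δ := by
      rw [Metric.mem_closedBall, dist_eq_norm]
      have he : x - δ • u - x = -(δ • u) := by abel
      rw [he, norm_neg, norm_smul, Real.norm_eq_abs, abs_of_nonneg hδ0, hu1, mul_one]
    have hfy0 : (inner ℝ g (x - (x - δ • u)) : ℝ) = δ * ‖g‖ := by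
      have he : x - (x - δ • u) = δ • u := by abel
      rw [he, real_inner_smul_right, hgu]
    have hbdd : BddAbove ((fun y => (inner ℝ g (x - y) : ℝ)) '' Metric.closedBall x δ) :=
      ((isCompact_closedBall x δ).image hcontf).bddAbove
    calc κ * (inner ℝ g (x - ys) : ℝ) ≤ δ * ‖g‖ := hcase
      _ = (inner ℝ g (x - (x - δ • u)) : ℝ) := hfy0.symm
      _ ≤ sSup ((fun y => (inner ℝ g (x - y) : ℝ)) '' Metric.closedBall x δ) :=
          le_csSup hbdd ⟨_, hy0, rfl⟩
  · push_neg at hcase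
    have hδR : δ < Rmin := by
      have h1 : κ * (inner ℝ g (x - ys) : ℝ) ≤ κ * (‖g‖ * D) :=
        mul_le_mul_of_nonneg_left hΔD hκpos.le
      nlinarith
    have hccne : Cᶜ.Nonempty := by
      by_contra hemp
      rw [Set.not_nonempty_iff_eq_empty, Set.compl_empty_iff] at hemp
      rw [hemp] at hysfr
      simp at hysfr
    obtain ⟨z, hzcl, hdz⟩ := isClosed_closure.exists_infDist_eq_dist hccne.closure x
    rw [Metric.infDist_closure] at hdz
    rw [← hδ] at hdz
    have hzC : z ∈ C := by
      apply aux_closedBall_infDist_compl_subset hcomp.isClosed hx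
      rw [Metric.mem_closedBall, dist_comm]
      exact le_of_eq hdz.symm
    have hzfr : z ∈ frontier C := by
      rw [frontier_eq_closure_inter_closure]
      exact ⟨subset_closure hzC, hzcl⟩
    obtain ⟨m, hm1, hmsup, hmball⟩ := hroll z hzfr
    have hdxz : ‖x - z‖ = δ := by rw [← dist_eq_norm, ← hdz]
    have hyin : x - δ • m ∈ C := by
      apply aux_closedBall_infDist_compl_subset hcomp.isClosed hx
      rw [Metric.mem_closedBall, dist_eq_norm]
      have he : x - δ • m - x = -(δ • m) := by abel
      rw [he, norm_neg, norm_smul, Real.norm_eq_abs, abs_of_nonneg hδ0, hm1, mul_one]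
    have hinm : δ ≤ (inner ℝ m (x - z) : ℝ) := by
      have h0 := hmsup _ hyin
      have he : x - δ • m - z = (x - z) - δ • m := by abel
      rw [he, inner_sub_right, real_inner_smul_right, real_inner_self_eq_norm_mul_norm, hm1] at h0
      linarith
    have hxz : x - z = δ • m := by
      have hn2 : ‖(x - z) - δ • m‖ ^ 2 ≤ 0 := by
        rw [norm_sub_sq_real, real_inner_smul_right, norm_smul, Real.norm_eq_abs,
          abs_of_nonneg hδ0, hm1, real_inner_comm, hdxz, mul_one]
        nlinarith
      have hn0 : ‖(x - z) - δ • m‖ = 0 := by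
        by_contra hne0
        have h2 : 0 < ‖(x - z) - δ • m‖ := (norm_nonneg _).lt_of_ne (Ne.symm hne0)
        have h3 : 0 < ‖(x - z) - δ • m‖ ^ 2 := by positivity
        linarith
      exact sub_eq_zero.mp (norm_eq_zero.mp hn0)
    set t : ℝ := inner ℝ u m with ht
    set az : ℝ := inner ℝ u (z - ys) with haz
    have haz0 : 0 ≤ az := husup z hzC
    have hazD : az ≤ D := by
      have h1 := real_inner_le_norm u (z - ys)
      rw [hu1, one_mul] at h1
      have h2 : ‖z - ys‖ ≤ D := by
        rw [← dist_eq_norm, ← hdiam]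
        exact Metric.dist_le_diam_of_mem hcomp.isBounded hzC hysC
      linarith
    have ht1 : t ≤ 1 := by
      have h1 := real_inner_le_norm u m
      rw [hu1, hm1] at h1
      simpa using h1
    -- key inequality: 2 β az ≤ 1 - t
    have hkey : 2 * β * az ≤ 1 - t := by
      have hS := aux_sc_normal hβ hC hzC hysC hm1 hmsup
      rcases eq_or_ne ys z with hyz | hyz
      · have : az = 0 := by rw [haz, hyz]; simp
        rw [this]
        linarith
      · have hpos : 0 < ‖ys - z‖ := by
          rw [norm_pos_iff, sub_ne_zero]; exact hyz
        set S : ℝ := inner ℝ m (ys - z) with hSdef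
        have hS' : β * ‖ys - z‖ ^ 2 ≤ S := hS
        have hS0 : 0 ≤ S := le_trans (by positivity) hS'
        have h1 : az + S ≤ ‖u - m‖ * ‖ys - z‖ := by
          have hcs := real_inner_le_norm (u - m) (z - ys)
          have hexp : (inner ℝ (u - m) (z - ys) : ℝ) = az + S := by
            rw [inner_sub_left, ← haz]
            have : (inner ℝ m (z - ys) : ℝ) = -S := by
              rw [hSdef, show z - ys = -(ys - z) by abel, inner_neg_right]
            rw [this]; ring
          rw [hexp] at hcs
          rwa [norm_sub_rev z ys] at hcs
        have hum : ‖u - m‖ ^ 2 = 2 - 2 * t := by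
          rw [norm_sub_sq_real, hu1, hm1, ← ht]; ring
        have h2 : (az + S) ^ 2 ≤ (2 - 2 * t) * ‖ys - z‖ ^ 2 := by
          have := mul_self_le_mul_self (by linarith) h1
          calc (az + S) ^ 2 = (az + S) * (az + S) := sq (az + S) ▸ by ring
            _ ≤ (‖u - m‖ * ‖ys - z‖) * (‖u - m‖ * ‖ys - z‖) := this
            _ = ‖u - m‖ ^ 2 * ‖ys - z‖ ^ 2 := by ring
            _ = (2 - 2 * t) * ‖ys - z‖ ^ 2 := by rw [hum]
        have h4 : 4 * az * S ≤ (az + S) ^ 2 := by nlinarith [sq_nonneg (az - S)]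
        have h5 : 4 * az * (β * ‖ys - z‖ ^ 2) ≤ 4 * az * S := by nlinarith
        have hhn2 : 0 < ‖ys - z‖ ^ 2 := by positivity
        have h6 : 2 * β * az * ‖ys - z‖ ^ 2 ≤ (1 - t) * ‖ys - z‖ ^ 2 := by nlinarith
        exact le_of_mul_le_mul_right (by linarith) hhn2
    -- main scalar inequality
    have hmain : κ * (δ * t + az) ≤ δ * t + Rmin * (1 - t) := by
      rcases le_or_gt 0 t with htpos | htneg
      · have e1 : κ * (δ * t) ≤ δ * t := by nlinarith [mul_nonneg hδ0 htpos]
        have e2 : κ * az ≤ 2 * β * Rmin * az := mul_le_mul_of_nonneg_right hκ1 haz0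
        have e3 : Rmin * (2 * β * az) ≤ Rmin * (1 - t) := mul_le_mul_of_nonneg_left hkey hRmin.le
        nlinarith
      · have hδt : δ * t ≤ 0 := mul_nonpos_of_nonneg_of_nonpos hδ0 htneg.le
        have e1 : κ * (δ * t) ≤ 0 := mul_nonpos_of_nonneg_of_nonpos hκpos.le hδt
        have e2 : κ * az ≤ κ * D := mul_le_mul_of_nonneg_left hazD hκpos.le
        have e3 : 0 ≤ t * (δ - Rmin) := by
          nlinarith [mul_nonneg (neg_nonneg.mpr htneg.le)
            (neg_nonneg.mpr (show δ - Rmin ≤ 0 by linarith))]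
        nlinarith
    -- conclude with the rolling ball at z
    have hgm : (inner ℝ g m : ℝ) = ‖g‖ * t := by
      rw [ht, hu, real_inner_smul_left]
      field_simp
    have hgaz : (inner ℝ g (z - ys) : ℝ) = ‖g‖ * az := by
      rw [haz, hu, real_inner_smul_left]
      field_simp
    refine ⟨z + Rmin • m, Rmin, hmball, ?_, ?_⟩
    · rw [Metric.mem_closedBall, dist_eq_norm]
      have he : x - (z + Rmin • m) = (δ - Rmin) • m := by
        have h1 : x - (z + Rmin • m) = (x - z) - Rmin • m := by abel
        rw [h1, hxz, ← sub_smul]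
      rw [he, norm_smul, Real.norm_eq_abs, abs_of_nonpos (by linarith), hm1, mul_one]
      linarith
    · set y0 : EuclideanSpace ℝ (Fin n) := z + Rmin • m - Rmin • u with hy0
      have hy0mem : y0 ∈ Metric.closedBall (z + Rmin • m) Rmin := by
        rw [Metric.mem_closedBall, dist_eq_norm]
        have he : y0 - (z + Rmin • m) = -(Rmin • u) := by rw [hy0]; abel
        rw [he, norm_neg, norm_smul, Real.norm_eq_abs, abs_of_nonneg hRmin.le, hu1, mul_one]
      have hfy0 : (inner ℝ g (x - y0) : ℝ) = ‖g‖ * (δ * t + Rmin * (1 - t)) := by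
        have hveq : x - y0 = ((x - z) - Rmin • m) + Rmin • u := by rw [hy0]; abel
        rw [hveq, inner_add_right, inner_sub_right, hxz, real_inner_smul_right,
          real_inner_smul_right, real_inner_smul_right, hgm, hgu]
        ring
      have hΔeq : (inner ℝ g (x - ys) : ℝ) = ‖g‖ * (δ * t + az) := by
        have hsplit : x - ys = (x - z) + (z - ys) := by abel
        rw [hsplit, inner_add_right, hxz, real_inner_smul_right, hgm, hgaz]
        ring
      have hbdd : BddAbove ((fun y => (inner ℝ g (x - y) : ℝ)) '' Metric.closedBall (z + Rmin • m) Rmin) :=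
        ((isCompact_closedBall _ _).image hcontf).bddAbove
      calc κ * (inner ℝ g (x - ys) : ℝ) = ‖g‖ * (κ * (δ * t + az)) := by rw [hΔeq]; ring
        _ ≤ ‖g‖ * (δ * t + Rmin * (1 - t)) := mul_le_mul_of_nonneg_left hmain hG.le
        _ = (inner ℝ g (x - y0) : ℝ) := hfy0.symm
        _ ≤ sSup ((fun y => (inner ℝ g (x - y) : ℝ)) '' Metric.closedBall (z + Rmin • m) Rmin) :=
            le_csSup hbdd ⟨y0, hy0mem, rfl⟩
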